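/- Let X be a Banach space, α ∈ ℝ \ {1}, and let A be an m-accretive operator on X that is homogeneous of order α, so that for each μ > 0 and f ∈ X the resolvent J^{A−f}_{μ} = (I + μ(A − f))^{−1} is a single-valued everywhere defined mapping on X. Then for every f ∈ X, λ > 0, t > 0, n ∈ ℕ with n ≥ 1, and u₀ ∈ X: λ^{1/(α−1)} ([J^{A−f}_{λt/n}]^n u₀) = [J^{A − λ^{α/(α−1)} f}_{t/n}]^n (λ^{1/(α−1)} u₀), where [J]^n denotes the n-fold composition of the map J. -/

import Mathlib

open MeasureTheory Filter Real Set Topology Pointwise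

noncomputable section

variable {X : Type*} [NormedAddCommGroup X] [NormedSpace ℝ X]

/-- The domain of a possibly multivalued operator `A ⊆ X × X`. -/
def opDomain (A : Set (X × X)) : Set X := {u | ∃ v, (u, v) ∈ A}

/-- An operator `A ⊆ X × X` is accretive. -/
def IsAccretive (A : Set (X × X)) : Prop :=
  ∀ p ∈ A, ∀ q ∈ A, ∀ lam : ℝ, 0 ≤ lam →
    ‖p.1 - q.1‖ ≤ ‖p.1 - q.1 + lam • (p.2 - q.2)‖

/-- An operator `A` is m-accretive: accretive plus the range condition
`Rg(I + λ A) = X` for all `λ > 0`. -/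
def IsMAccretive (A : Set (X × X)) : Prop :=
  IsAccretive A ∧ ∀ lam : ℝ, 0 < lam → ∀ z : X, ∃ p ∈ A, p.1 + lam • p.2 = z

/-- The shifted operator `A + ω I`. -/
def opShift (A : Set (X × X)) (ω : ℝ) : Set (X × X) :=
  {p | ∃ q ∈ A, p = (q.1, q.2 + ω • q.1)}

/-- `A` is ω-quasi m-accretive: `A + ω I` is accretive and `Rg(I + λ A) = X`
for all `λ > 0` with `λ ω < 1`. -/
def IsQuasiMAccretive (A : Set (X × X)) (ω : ℝ) : Prop :=
  IsAccretive (opShift A ω) ∧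
    ∀ lam : ℝ, 0 < lam → lam * ω < 1 → ∀ z : X, ∃ p ∈ A, p.1 + lam • p.2 = z

/-- `A` is homogeneous of order `α`: `(0,0) ∈ A` and for `u ∈ D(A)`, `λ ≥ 0` one has
`λ u ∈ D(A)` and `A(λ u) = λ^α A u`. -/
def IsHomogeneousOp (A : Set (X × X)) (α : ℝ) : Prop :=
  ((0 : X), (0 : X)) ∈ A ∧
    ∀ u ∈ opDomain A, ∀ lam : ℝ, 0 ≤ lam →
      lam • u ∈ opDomain A ∧
        {w : X | (lam • u, w) ∈ A} = (lam ^ α) • {v : X | (u, v) ∈ A}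

/-- The perturbed operator `A + F`. -/
def opPerturb (A : Set (X × X)) (F : X → X) : Set (X × X) :=
  {p | ∃ v, (p.1, v) ∈ A ∧ p.2 = v + F p.1}

/-- `u` is a mild solution on `[0,T]` of `du/dt + B(u(t)) ∋ f(t)`, `u(0) = u₀`,
in the sense of Bénilan–Crandall ε-discretizations. -/
def IsMildSolution (B : Set (X × X)) (T : ℝ) (f : ℝ → X) (u₀ : X) (u : ℝ → X) : Prop :=
  ContinuousOn u (Icc 0 T) ∧ u 0 = u₀ ∧
    ∀ ε > 0, ∃ (N : ℕ) (τ : ℕ → ℝ) (v : ℕ → X), 0 < N ∧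
      τ 0 = 0 ∧ τ N = T ∧ v 0 = u₀ ∧
      (∀ i < N, τ i < τ (i + 1) ∧ τ (i + 1) - τ i < ε) ∧
      (∑ i ∈ Finset.range N, ∫ s in τ i..τ (i + 1),
          ‖f s - (τ (i + 1) - τ i)⁻¹ • ∫ r in τ i..τ (i + 1), f r‖) < ε ∧
      (∀ i < N, ∃ w : X, (v (i + 1), w) ∈ B ∧
          (τ (i + 1) - τ i)⁻¹ • (v (i + 1) - v i) + w
            = (τ (i + 1) - τ i)⁻¹ • ∫ r in τ i..τ (i + 1), f r) ∧
      (∀ i < N, ∀ s ∈ Ioc (τ i) (τ (i + 1)), ‖u s - v (i + 1)‖ < ε)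

/-- **Identity (2.37)**: the iterated resolvents of a homogeneous m-accretive operator
satisfy the scaling identity
`λ^{1/(α-1)} ([J^{A-f}_{λt/n}]ⁿ u₀) = [J^{A-λ^{α/(α-1)} f}_{t/n}]ⁿ (λ^{1/(α-1)} u₀)`. -/
theorem statement14 [CompleteSpace X]
    (α : ℝ) (hα : α ≠ 1)
    (A : Set (X × X)) (hA : IsMAccretive A) (hAhom : IsHomogeneousOp A α)
    (f : X) (lam t : ℝ) (hlam : 0 < lam) (ht : 0 < t) (n : ℕ) (hn : 1 ≤ n) (u₀ : X)
    (J1 J2 : X → X)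
    (hJ1 : ∀ v : X, ∃ w : X, (J1 v, w) ∈ A ∧ J1 v + (lam * t / n) • (w - f) = v)
    (hJ2 : ∀ v : X, ∃ w : X, (J2 v, w) ∈ A ∧
      J2 v + (t / n) • (w - (lam ^ (α / (α - 1))) • f) = v) :
    (lam ^ (1 / (α - 1))) • (J1^[n] u₀) = J2^[n] ((lam ^ (1 / (α - 1))) • u₀) := by

  have hα1 : α - 1 ≠ 0 := sub_ne_zero.mpr hα
  set c : ℝ := lam ^ (1 / (α - 1)) with hc
  have hcpos : 0 < c := Real.rpow_pos_of_pos hlam _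
  have hcα : c ^ α = lam ^ (α / (α - 1)) := by
    rw [hc, ← Real.rpow_mul hlam.le]
    congr 1
    ring
  have hmul : c * (lam * t / ↑n) = t / ↑n * lam ^ (α / (α - 1)) := by
    have : c * lam = lam ^ (α / (α - 1)) := by
      rw [hc]
      nth_rewrite 2 [show lam = lam ^ (1 : ℝ) by rw [Real.rpow_one]]
      rw [← Real.rpow_add hlam]
      congr 1
      field_simp
      ring
    calc c * (lam * t / ↑n) = (c * lam) * (t / ↑n) := by ring
      _ = t / ↑n * lam ^ (α / (α - 1)) := by rw [this]; ring
  have htn : (0:ℝ) ≤ t / ↑n := by positivity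
  -- key commuting lemma
  have key : ∀ v : X, c • J1 v = J2 (c • v) := by
    intro v
    obtain ⟨w, hwA, hw⟩ := hJ1 v
    obtain ⟨w2, hw2A, hw2⟩ := hJ2 (c • v)
    have hdom : J1 v ∈ opDomain A := ⟨w, hwA⟩
    obtain ⟨-, hset⟩ := hAhom.2 (J1 v) hdom c hcpos.le
    have hmem : (c • J1 v, (c ^ α) • w) ∈ A := by
      have : (c ^ α) • w ∈ {x : X | (c • J1 v, x) ∈ A} := by
        rw [hset]; exact smul_mem_smul_set hwA
      exact this
    rw [hcα] at hmem
    -- c • J1 v satisfies the J2-resolvent equation at c • v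
    have heq : c • J1 v + (t / ↑n) • ((lam ^ (α / (α - 1))) • w
        - (lam ^ (α / (α - 1))) • f) = c • v := by
      have := congrArg (fun x => c • x) hw
      simp only [smul_add, smul_smul] at this
      rw [← this]
      congr 1
      rw [← smul_sub, smul_smul, hmul]
    -- uniqueness via accretivity
    have hsub : c • J1 v - J2 (c • v)
        + (t / ↑n) • ((lam ^ (α / (α - 1))) • w - w2) = 0 := by
      have h2 : (lam ^ (α / (α - 1))) • w - w2
          = ((lam ^ (α / (α - 1))) • w - (lam ^ (α / (α - 1))) • f)
            - (w2 - (lam ^ (α / (α - 1))) • f) := by abel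
      rw [h2, smul_sub]
      have : c • J1 v + (t / ↑n) • ((lam ^ (α / (α - 1))) • w
          - (lam ^ (α / (α - 1))) • f)
          - (J2 (c • v) + (t / ↑n) • (w2 - (lam ^ (α / (α - 1))) • f)) = 0 := by
        rw [heq, hw2]; abel
      rw [← this]; abel
    have hacc := hA.1 (c • J1 v, (lam ^ (α / (α - 1))) • w) hmem
      (J2 (c • v), w2) hw2A (t / ↑n) htn
    simp only at hacc
    rw [hsub, norm_zero] at hacc
    exact sub_eq_zero.mp (norm_le_zero_iff.mp hacc)
  -- iterate
  have main : ∀ m : ℕ, c • (J1^[m] u₀) = J2^[m] (c • u₀) := by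
    intro m
    induction m with
    | zero => simp
    | succ k ih =>
      rw [Function.iterate_succ_apply', Function.iterate_succ_apply', key, ih]
  exact main n
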